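/- Let T be a p-string of length n ending with a unique smallest end-marker $, let R⁻¹(i) be the starting position of the lexicographically i-th p-encoded suffix of T, and LCP∞[i] = lcp∞(⟨T[R⁻¹(i−1)..]⟩, ⟨T[R⁻¹(i)..]⟩) for 1 < i ≤ n, LCP∞[1] undefined/0. Then for any 1 ≤ i < j ≤ n, lcp∞(⟨T[R⁻¹(i)..]⟩, ⟨T[R⁻¹(j)..]⟩) = min{ LCP∞[g] : i+1 ≤ g ≤ j }. -/

import Mathlib

/-- Symbols of a parameterized string: static symbols `s a` (from Σs) and
parameter symbols `p a` (from Σp). -/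
inductive PSym where
  | s : ℕ → PSym
  | p : ℕ → PSym
deriving DecidableEq

/-- Symbols of a p-encoded string: static symbols, finite distances, and ∞. -/
inductive Enc where
  | s : ℕ → Enc
  | fin : ℕ → Enc
  | inf : Enc
deriving DecidableEq

/-- Order embedding: static symbols < natural numbers < ∞. -/
def Enc.toPair : Enc → ℕ ×ₗ ℕ
  | .s a => toLex (0, a)
  | .fin d => toLex (1, d)
  | .inf => toLex (2, 0)

instance : LinearOrder Enc :=
  LinearOrder.lift' Enc.toPair (by
    rintro (a | a | _) (b | b | _) h <;>
      simp_all [Enc.toPair, toLex_inj, Prod.ext_iff])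

/-- Largest position `j < i` (0-based) carrying the same symbol as position `i`. -/
def prevOcc (w : List PSym) (i : ℕ) : Option ℕ :=
  ((List.range i).filter (fun j => w[j]? = w[i]?)).max?

/-- The p-encoding of position `i` (0-based) of `w`. -/
def pencSym (w : List PSym) (i : ℕ) : Enc :=
  match w[i]? with
  | some (PSym.s a) => Enc.s a
  | some (PSym.p _) =>
    match prevOcc w i with
    | some j => Enc.fin (i - j)
    | none => Enc.inf
  | none => Enc.inf

/-- The p-encoding ⟨w⟩ of a p-string `w`. -/
def penc (w : List PSym) : List Enc :=
  (List.range w.length).map (pencSym w)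

/-- Lexicographic (strict) order on p-encoded strings. -/
def lexLt (x y : List Enc) : Prop := List.Lex (· < ·) x y

def lexLe (x y : List Enc) : Prop := lexLt x y ∨ x = y

/-- Length of the longest common prefix. -/
def lcp {α : Type*} [DecidableEq α] : List α → List α → ℕ
  | a :: x, b :: y => if a = b then lcp x y + 1 else 0
  | _, _ => 0

/-- Number of ∞'s in the longest common prefix of two p-encoded strings. -/
def lcpInf (x y : List Enc) : ℕ := (x.take (lcp x y)).count Enc.inf

/-- Number of distinct p-symbols occurring in `w` (denoted |w|_p). -/
def distinctP (w : List PSym) : ℕ :=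
  (w.filterMap (fun s => match s with | PSym.p a => some a | PSym.s _ => none)).dedup.length

/-- For `w` starting with a p-symbol: the rank of `w[1]` among the distinct
p-symbols of `w[1..h+1]`, where `h+1 = min{|w|, second occurrence of w[1] in w}`. -/
def fceRank (w : List PSym) : ℕ :=
  match w with
  | [] => 0
  | c :: rest => distinctP ((c :: rest).take (min (c :: rest).length (2 + rest.idxOf c)))

/-- The function fce from the paper; `fce ε = $` is modelled as `Enc.s 0`. -/
def fce (w : List PSym) : Enc :=
  match w with
  | [] => Enc.s 0
  | PSym.s a :: _ => Enc.s a
  | w => Enc.fin (fceRank w)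


lemma lcp_eq_min {x y z : List Enc} (hxy : lexLt x y) (hyz : lexLt y z) :
    lcp x z = min (lcp x y) (lcp y z) := by
  induction x generalizing y z with
  | nil =>
    cases y with
    | nil => cases hxy
    | cons b y' => simp [lcp]
  | cons a x' ih =>
    cases y with
    | nil => cases hxy
    | cons b y' =>
      cases z with
      | nil => cases hyz
      | cons c z' =>
        cases hxy with
        | cons h1 =>
          cases hyz with
          | cons h2 =>
            have := ih h1 h2
            simp [lcp, this, Nat.succ_min_succ]
          | rel h2 =>
            have hac : a ≠ c := ne_of_lt h2
            simp [lcp, hac]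
        | rel h1 =>
          have hab : a ≠ b := ne_of_lt h1
          cases hyz with
          | cons h2 => simp [lcp, hab, Nat.zero_min]
          | rel h2 => simp [lcp, hab, Nat.zero_min, ne_of_lt (h1.trans h2)]

lemma take_lcp_eq (x y : List Enc) : x.take (lcp x y) = y.take (lcp x y) := by
  induction x generalizing y with
  | nil => simp [lcp]
  | cons a x' ih =>
    cases y with
    | nil => simp [lcp]
    | cons b y' =>
      by_cases h : a = b
      · subst h; simp [lcp, ih]
      · simp [lcp, h]

lemma count_take_mono (l : List Enc) {m k : ℕ} (h : m ≤ k) :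
    (l.take m).count Enc.inf ≤ (l.take k).count Enc.inf := by
  have hmk : l.take m = (l.take k).take m := by
    rw [List.take_take, Nat.min_eq_left h]
  rw [hmk]
  exact ((l.take k).take_sublist m).count_le _

lemma lcpInf_eq_min {x y z : List Enc} (hxy : lexLt x y) (hyz : lexLt y z) :
    lcpInf x z = min (lcpInf x y) (lcpInf y z) := by
  have hA := lcp_eq_min hxy hyz
  unfold lcpInf
  rw [hA]
  rcases le_total (lcp x y) (lcp y z) with h | h
  · rw [Nat.min_eq_left h]
    have h1 : (x.take (lcp x y)).count Enc.inf ≤ (y.take (lcp y z)).count Enc.inf := by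
      rw [take_lcp_eq x y]
      exact count_take_mono y h
    exact (min_eq_left h1).symm
  · rw [Nat.min_eq_right h]
    have hxy2 : x.take (lcp y z) = y.take (lcp y z) := by
      calc x.take (lcp y z) = (x.take (lcp x y)).take (lcp y z) := by
            rw [List.take_take, Nat.min_eq_left h]
        _ = (y.take (lcp x y)).take (lcp y z) := by rw [take_lcp_eq x y]
        _ = y.take (lcp y z) := by rw [List.take_take, Nat.min_eq_left h]
    rw [hxy2]
    have h2 : (y.take (lcp y z)).count Enc.inf ≤ (x.take (lcp x y)).count Enc.inf := by
      rw [take_lcp_eq x y]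
      exact count_take_mono y h
    exact (min_eq_right h2).symm

lemma stmt12_aux (T : List PSym) (n : ℕ) (Rinv : ℕ → ℕ)
    (hsorted : ∀ i j, i < j → j < n →
      lexLt (penc (T.drop (Rinv i))) (penc (T.drop (Rinv j))))
    (i : ℕ) : ∀ j, i < j → j < n →
    lcpInf (penc (T.drop (Rinv i))) (penc (T.drop (Rinv j))) =
      sInf {v : ℕ | ∃ g, i + 1 ≤ g ∧ g ≤ j ∧
        v = lcpInf (penc (T.drop (Rinv (g - 1)))) (penc (T.drop (Rinv g)))} := by
  intro j
  induction j with
  | zero => intro h; omega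
  | succ j ih =>
    intro hij hjn
    rcases Nat.lt_or_ge i j with hij' | hge
    · have hjn' : j < n := by omega
      have h1 := hsorted i j hij' hjn'
      have h2 := hsorted j (j + 1) (by omega) hjn
      rw [lcpInf_eq_min h1 h2, ih hij' hjn']
      set c := lcpInf (penc (T.drop (Rinv j))) (penc (T.drop (Rinv (j + 1)))) with hc
      set A := {v : ℕ | ∃ g, i + 1 ≤ g ∧ g ≤ j ∧
        v = lcpInf (penc (T.drop (Rinv (g - 1)))) (penc (T.drop (Rinv g)))} with hA
      set S := {v : ℕ | ∃ g, i + 1 ≤ g ∧ g ≤ j + 1 ∧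
        v = lcpInf (penc (T.drop (Rinv (g - 1)))) (penc (T.drop (Rinv g)))} with hS
      have hAne : A.Nonempty := ⟨_, j, by omega, le_refl _, rfl⟩
      have hcS : c ∈ S := ⟨j + 1, by omega, le_refl _, by simp [hc]⟩
      have hAsubS : A ⊆ S := by
        rintro v ⟨g, hg1, hg2, rfl⟩
        exact ⟨g, hg1, by omega, rfl⟩
      apply le_antisymm
      · apply le_csInf ⟨c, hcS⟩
        rintro b ⟨g, hg1, hg2, rfl⟩
        rcases Nat.lt_or_ge g (j + 1) with hg | hg
        · have hbA : _ ∈ A := ⟨g, hg1, by omega, rfl⟩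
          exact le_trans (min_le_left _ _) (Nat.sInf_le hbA)
        · have : g = j + 1 := by omega
          subst this
          refine le_trans (min_le_right _ _) ?_
          simp [hc]
      · refine le_min ?_ (Nat.sInf_le hcS)
        exact Nat.sInf_le (hAsubS (Nat.sInf_mem hAne))
    · have hieq : i = j := by omega
      subst hieq
      have hset : {v : ℕ | ∃ g, i + 1 ≤ g ∧ g ≤ i + 1 ∧
          v = lcpInf (penc (T.drop (Rinv (g - 1)))) (penc (T.drop (Rinv g)))} =
          {lcpInf (penc (T.drop (Rinv i))) (penc (T.drop (Rinv (i + 1))))} := by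
        ext v
        constructor
        · rintro ⟨g, hg1, hg2, rfl⟩
          have : g = i + 1 := by omega
          subst this
          simp
        · rintro rfl
          exact ⟨i + 1, le_refl _, le_refl _, by simp⟩
      rw [hset, csInf_singleton]

theorem stmt12 (T : List PSym) (n : ℕ) (hn : n = T.length)
    -- `$` (modelled as `PSym.s 0`, the smallest symbol) is the end-marker of `T`
    (hend : T.getLast? = some (PSym.s 0))
    (huniq : ∀ i, i + 1 < n → T[i]? ≠ some (PSym.s 0))
    -- `Rinv i` is the (0-based) starting position of the lexicographically
    -- (i+1)-st p-encoded suffix of `T`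
    (Rinv : ℕ → ℕ) (hdom : ∀ i < n, Rinv i < n)
    (hsorted : ∀ i j, i < j → j < n →
      lexLt (penc (T.drop (Rinv i))) (penc (T.drop (Rinv j))))
    (i j : ℕ) (hij : i < j) (hjn : j < n) :
    lcpInf (penc (T.drop (Rinv i))) (penc (T.drop (Rinv j))) =
      sInf {v : ℕ | ∃ g, i + 1 ≤ g ∧ g ≤ j ∧
        v = lcpInf (penc (T.drop (Rinv (g - 1)))) (penc (T.drop (Rinv g)))} := by
  exact stmt12_aux T n Rinv hsorted i j hij hjn
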